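/- In the t-splitter tree rooted at box B (a binary tree of subboxes of B in which each internal node T has two children Box(P_BL(T), S) and Box(S, P_TR(T)) for some point S ∈ T), the following hold: (1) any two boxes in the tree, neither an ancestor of the other, have disjoint index sets; (2) the leaves, ordered left-to-right, form a box chain spanning B; and (3) for every index x ∈ X(B), the set of tree boxes whose index set contains x forms a root-to-leaf path. -/

import Mathlib

/-- `P ≺ Q` for points of ℕ². -/
def prec (P Q : ℕ × ℕ) : Prop := P.1 < Q.1 ∧ P.2 ≤ Q.2

/-- A splitter tree rooted at the box with bottom-left corner `P` and top-right
corner `Q` (boxes are identified with their corner pairs): each internal node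
with corners `(P, Q)` is split at a point `S` with `P ≺ S ≺ Q` into children
`Box(P,S)` and `Box(S,Q)`. -/
inductive SplitTree : ℕ × ℕ → ℕ × ℕ → Type
  | leaf : ∀ P Q, prec P Q → SplitTree P Q
  | node : ∀ P S Q, prec P S → prec S Q →
      SplitTree P S → SplitTree S Q → SplitTree P Q

/-- The box (corner pair) `b` occurs in the tree. -/
def SplitTree.boxIn : ∀ {P Q}, SplitTree P Q → (ℕ × ℕ) × (ℕ × ℕ) → Prop
  | P, Q, .leaf _ _ _, b => b = (P, Q)
  | P, Q, .node _ _ _ _ _ l r, b => b = (P, Q) ∨ l.boxIn b ∨ r.boxIn b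

/-- `b` is a leaf box of the tree. -/
def SplitTree.leafIn : ∀ {P Q}, SplitTree P Q → (ℕ × ℕ) × (ℕ × ℕ) → Prop
  | P, Q, .leaf _ _ _, b => b = (P, Q)
  | _, _, .node _ _ _ _ _ l r, b => l.leafIn b ∨ r.leafIn b

/-- `anc t b₁ b₂`: `b₂` occurs in the subtree rooted at an occurrence of `b₁`
(ancestor-or-equal relation on boxes of the tree). -/
def SplitTree.anc : ∀ {P Q}, SplitTree P Q → (ℕ × ℕ) × (ℕ × ℕ) →
    (ℕ × ℕ) × (ℕ × ℕ) → Prop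
  | P, Q, .leaf _ _ _, b₁, b₂ => b₁ = (P, Q) ∧ b₂ = (P, Q)
  | P, Q, .node _ _ _ _ _ l r, b₁, b₂ =>
      (b₁ = (P, Q) ∧ (b₂ = (P, Q) ∨ l.boxIn b₂ ∨ r.boxIn b₂)) ∨
      l.anc b₁ b₂ ∨ r.anc b₁ b₂

/-- Leaves of the tree in left-to-right order. -/
def SplitTree.leavesList : ∀ {P Q}, SplitTree P Q → List ((ℕ × ℕ) × (ℕ × ℕ))
  | P, Q, .leaf _ _ _ => [(P, Q)]
  | _, _, .node _ _ _ _ _ l r => l.leavesList ++ r.leavesList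

/-- In the splitter tree rooted at `Box(P,Q)`:
(1) two boxes of the tree, neither an ancestor of the other, have disjoint index
sets (here the index set of a box with corners `(U,V)` is `(U.1, V.1]`);
(2) the leaves, in left-to-right order, form a box chain spanning `Box(P,Q)`;
(3) for every index `x ∈ (P.1, Q.1]`, the set of tree boxes whose index set
contains `x` is exactly the set of ancestors of some leaf, i.e. a root-to-leaf
path. -/

lemma boxIn_bounds : ∀ {P Q : ℕ × ℕ} (t : SplitTree P Q) {b}, t.boxIn b →
    P.1 ≤ b.1.1 ∧ b.1.1 < b.2.1 ∧ b.2.1 ≤ Q.1 := by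
  intro P Q t
  induction t with
  | leaf P Q h => intro b hb; subst hb; exact ⟨le_refl _, h.1, le_refl _⟩
  | node P S Q hPS hSQ l r ihl ihr =>
    intro b hb
    rcases hb with hb | hb | hb
    · subst hb; exact ⟨le_refl _, lt_trans hPS.1 hSQ.1, le_refl _⟩
    · have := ihl hb; have := hPS.1; have := hSQ.1; omega
    · have := ihr hb; have := hPS.1; have := hSQ.1; omega

lemma leafIn_boxIn : ∀ {P Q : ℕ × ℕ} (t : SplitTree P Q) {b}, t.leafIn b → t.boxIn b := by
  intro P Q t
  induction t with
  | leaf P Q h => intro b hb; exact hb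
  | node P S Q hPS hSQ l r ihl ihr =>
    intro b hb
    rcases hb with hb | hb
    · exact Or.inr (Or.inl (ihl hb))
    · exact Or.inr (Or.inr (ihr hb))

lemma anc_boxIn : ∀ {P Q : ℕ × ℕ} (t : SplitTree P Q) {b₁ b₂}, t.anc b₁ b₂ →
    t.boxIn b₁ ∧ t.boxIn b₂ := by
  intro P Q t
  induction t with
  | leaf P Q h => intro b₁ b₂ hb; exact hb
  | node P S Q hPS hSQ l r ihl ihr =>
    intro b₁ b₂ hb
    rcases hb with ⟨h1, h2⟩ | hb | hb
    · exact ⟨Or.inl h1, h2⟩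
    · obtain ⟨u, v⟩ := ihl hb; exact ⟨Or.inr (Or.inl u), Or.inr (Or.inl v)⟩
    · obtain ⟨u, v⟩ := ihr hb; exact ⟨Or.inr (Or.inr u), Or.inr (Or.inr v)⟩

lemma leavesList_ne_nil : ∀ {P Q : ℕ × ℕ} (t : SplitTree P Q), t.leavesList ≠ [] := by
  intro P Q t
  induction t with
  | leaf P Q h => simp [SplitTree.leavesList]
  | node P S Q hPS hSQ l r ihl ihr =>
    simp [SplitTree.leavesList, ihl, ihr]

theorem stmt19 {P Q : ℕ × ℕ} (t : SplitTree P Q) :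
    (∀ b₁ b₂, t.boxIn b₁ → t.boxIn b₂ → ¬ t.anc b₁ b₂ → ¬ t.anc b₂ b₁ →
      ∀ x : ℕ, ¬ ((b₁.1.1 < x ∧ x ≤ b₁.2.1) ∧ (b₂.1.1 < x ∧ x ≤ b₂.2.1))) ∧
    (List.Chain' (fun b₁ b₂ => b₁.2 = b₂.1) t.leavesList ∧
      (∃ b, t.leavesList.head? = some b ∧ b.1 = P) ∧
      (∃ b, t.leavesList.getLast? = some b ∧ b.2 = Q) ∧
      (∀ b ∈ t.leavesList, prec b.1 b.2)) ∧
    (∀ x : ℕ, P.1 < x → x ≤ Q.1 →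
      ∃ bl, t.leafIn bl ∧
        ∀ b, (t.boxIn b ∧ b.1.1 < x ∧ x ≤ b.2.1) ↔ t.anc b bl) := by
  
  induction t with
  | leaf P Q h =>
    refine ⟨?_, ⟨?_, ?_, ?_, ?_⟩, ?_⟩
    · intro b₁ b₂ h₁ h₂ ha _ x
      exact absurd ⟨h₁, h₂⟩ ha
    · exact List.isChain_singleton _
    · exact ⟨(P, Q), rfl, rfl⟩
    · exact ⟨(P, Q), rfl, rfl⟩
    · intro b hb; simp [SplitTree.leavesList] at hb; subst hb; exact h
    · intro x hx1 hx2
      refine ⟨(P, Q), rfl, ?_⟩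
      intro b
      constructor
      · rintro ⟨hb, _⟩; exact ⟨hb, rfl⟩
      · rintro ⟨hb, _⟩; subst hb; exact ⟨rfl, hx1, hx2⟩
  | node P S Q hPS hSQ l r ihl ihr =>
    obtain ⟨d1l, ⟨c2l, ⟨hbl, hhl, hbl1⟩, ⟨gbl, hgl, hgl2⟩, precl⟩, p3l⟩ := ihl
    obtain ⟨d1r, ⟨c2r, ⟨hbr, hhr, hbr1⟩, ⟨gbr, hgr, hgr2⟩, precr⟩, p3r⟩ := ihr
    refine ⟨?_, ⟨?_, ?_, ?_, ?_⟩, ?_⟩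
    · -- part 1
      intro b₁ b₂ h₁ h₂ ha12 ha21 x hx
      rcases h₁ with h₁ | h₁ | h₁
      · exact ha12 (Or.inl ⟨h₁, h₂⟩)
      · rcases h₂ with h₂ | h₂ | h₂
        · exact ha21 (Or.inl ⟨h₂, Or.inr (Or.inl h₁)⟩)
        · exact d1l b₁ b₂ h₁ h₂ (fun h => ha12 (Or.inr (Or.inl h)))
            (fun h => ha21 (Or.inr (Or.inl h))) x hx
        · have u := boxIn_bounds l h₁
          have v := boxIn_bounds r h₂
          omega
      · rcases h₂ with h₂ | h₂ | h₂
        · exact ha21 (Or.inl ⟨h₂, Or.inr (Or.inr h₁)⟩)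
        · have u := boxIn_bounds r h₁
          have v := boxIn_bounds l h₂
          omega
        · exact d1r b₁ b₂ h₁ h₂ (fun h => ha12 (Or.inr (Or.inr h)))
            (fun h => ha21 (Or.inr (Or.inr h))) x hx
    · -- chain
      show List.Chain' _ (l.leavesList ++ r.leavesList)
      refine List.IsChain.append c2l c2r ?_
      intro a ha b hb
      have ha' : a = gbl := by
        rw [hgl] at ha; exact (Option.some_inj.mp ha.symm)
      have hb' : b = hbr := by
        rw [hhr] at hb; exact (Option.some_inj.mp hb.symm)
      rw [ha', hb', hgl2, hbr1]
    · -- head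
      refine ⟨hbl, ?_, hbl1⟩
      show (l.leavesList ++ r.leavesList).head? = some hbl
      rw [List.head?_append_of_ne_nil _ (leavesList_ne_nil l)]
      exact hhl
    · -- last
      refine ⟨gbr, ?_, hgr2⟩
      show (l.leavesList ++ r.leavesList).getLast? = some gbr
      rw [List.getLast?_append_of_ne_nil _ (leavesList_ne_nil r)]
      exact hgr
    · -- prec on leaves
      intro b hb
      show prec b.1 b.2
      have : b ∈ l.leavesList ++ r.leavesList := hb
      rcases List.mem_append.mp this with hb | hb
      · exact precl b hb
      · exact precr b hb
    · -- part 3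
      intro x hx1 hx2
      by_cases hxs : x ≤ S.1
      · obtain ⟨bl, hblin, hbliff⟩ := p3l x hx1 hxs
        have hblbox := leafIn_boxIn l hblin
        refine ⟨bl, Or.inl hblin, ?_⟩
        intro b
        constructor
        · rintro ⟨hb, hx3, hx4⟩
          rcases hb with hb | hb | hb
          · exact Or.inl ⟨hb, Or.inr (Or.inl hblbox)⟩
          · exact Or.inr (Or.inl ((hbliff b).mp ⟨hb, hx3, hx4⟩))
          · have u := boxIn_bounds r hb
            omega
        · rintro (⟨hb, _⟩ | hb | hb)
          · subst hb; exact ⟨Or.inl rfl, hx1, hx2⟩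
          · obtain ⟨h1, h2, h3⟩ := (hbliff b).mpr hb
            exact ⟨Or.inr (Or.inl h1), h2, h3⟩
          · exfalso
            have := (anc_boxIn r hb).2
            have u := boxIn_bounds r this
            have v := boxIn_bounds l hblbox
            omega
      · push_neg at hxs
        obtain ⟨bl, hblin, hbliff⟩ := p3r x hxs hx2
        have hblbox := leafIn_boxIn r hblin
        refine ⟨bl, Or.inr hblin, ?_⟩
        intro b
        constructor
        · rintro ⟨hb, hx3, hx4⟩
          rcases hb with hb | hb | hb
          · exact Or.inl ⟨hb, Or.inr (Or.inr hblbox)⟩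
          · have u := boxIn_bounds l hb
            omega
          · exact Or.inr (Or.inr ((hbliff b).mp ⟨hb, hx3, hx4⟩))
        · rintro (⟨hb, _⟩ | hb | hb)
          · subst hb; exact ⟨Or.inl rfl, hx1, hx2⟩
          · exfalso
            have := (anc_boxIn l hb).2
            have u := boxIn_bounds l this
            have v := boxIn_bounds r hblbox
            omega
          · obtain ⟨h1, h2, h3⟩ := (hbliff b).mpr hb
            exact ⟨Or.inr (Or.inr h1), h2, h3⟩
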